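/- Suppose liminf_{r→∞} f̊_r^m(χ) ≥ f̊^m(χ) for every χ ∈ [0,∞)^M and every m = 1,…,M. Then liminf_{r→∞} χ̂_r ≥ χ̂ componentwise. -/

import Mathlib

open MeasureTheory Filter Set Topology
open scoped ENNReal

/-- The fire-sales iteration `σ_(k)` (number of sold shares, not normalized by `n`):
`σ_(0) = 0` and `σ_(k+1)^m = ∑_i x_i^m ρ((ℓ_i + x_i · h(σ_(k)/n)) / c_i)`. -/
noncomputable def sigmaIter {M : ℕ} (ρ : ℝ → ℝ) (h : (Fin M → ℝ) → Fin M → ℝ)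
    (n : ℕ) (x : Fin n → Fin M → ℝ) (c : Fin n → ℝ≥0∞) (ℓ : Fin n → ℝ) :
    ℕ → Fin M → ℝ
  | 0 => 0
  | k + 1 => fun m =>
      ∑ i, x i m *
        ρ ((ℓ i + ∑ m', x i m' * h (fun m'' => sigmaIter ρ h n x c ℓ k m'' / (n : ℝ)) m') /
          (c i).toReal)

/-- `f^m(χ) = E[X^m ρ((L + X·h(χ))/C)] − χ^m`. -/
noncomputable def fFS {Ω : Type*} [MeasureSpace Ω] {M : ℕ} (ρ : ℝ → ℝ)
    (h : (Fin M → ℝ) → Fin M → ℝ) (X : Ω → Fin M → ℝ) (C : Ω → ℝ≥0∞) (L : Ω → ℝ)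
    (m : Fin M) (χ : Fin M → ℝ) : ℝ :=
  (∫ ω, X ω m * ρ ((L ω + ∑ m', X ω m' * h χ m') / (C ω).toReal)) - χ m

/-- `P = ∩_m {χ ∈ [0,∞)^M : f^m(χ) ≥ 0}`. -/
noncomputable def PsetFS {Ω : Type*} [MeasureSpace Ω] {M : ℕ} (ρ : ℝ → ℝ)
    (h : (Fin M → ℝ) → Fin M → ℝ) (X : Ω → Fin M → ℝ) (C : Ω → ℝ≥0∞) (L : Ω → ℝ) :
    Set (Fin M → ℝ) :=
  {χ | (∀ m, 0 ≤ χ m) ∧ ∀ m, 0 ≤ fFS ρ h X C L m χ}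

/-- `P₀`, the largest connected subset of `P` containing `0`. -/
noncomputable def P0FS {Ω : Type*} [MeasureSpace Ω] {M : ℕ} (ρ : ℝ → ℝ)
    (h : (Fin M → ℝ) → Fin M → ℝ) (X : Ω → Fin M → ℝ) (C : Ω → ℝ≥0∞) (L : Ω → ℝ) :
    Set (Fin M → ℝ) :=
  connectedComponentIn (PsetFS ρ h X C L) 0

/-- `χ*`, defined by `(χ*)^m = sup_{χ ∈ P₀} χ^m`. -/
noncomputable def chiStarFS {Ω : Type*} [MeasureSpace Ω] {M : ℕ} (ρ : ℝ → ℝ)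
    (h : (Fin M → ℝ) → Fin M → ℝ) (X : Ω → Fin M → ℝ) (C : Ω → ℝ≥0∞) (L : Ω → ℝ) :
    Fin M → ℝ :=
  fun m => sSup ((fun χ => χ m) '' P0FS ρ h X C L)

section Rhoc

variable (ρ ρc : ℝ → ℝ) (hρ_mono : MonotoneOn ρ (Set.Ici 0))
  (hρ_mem : ∀ u ∈ Set.Ici (0:ℝ), ρ u ∈ Set.Icc (0:ℝ) 1)
  (hρc : ∀ u : ℝ, 0 ≤ u → Tendsto (fun ε => ρ ((1 - ε) * u)) (𝓝[>] 0) (𝓝 (ρc u)))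

include hρc

theorem rhoc_mem (hρ_mem : ∀ u ∈ Set.Ici (0:ℝ), ρ u ∈ Set.Icc (0:ℝ) 1)
    {u : ℝ} (hu : 0 ≤ u) : ρc u ∈ Set.Icc (0:ℝ) 1 := by
  have hIoo : Ioo (0:ℝ) 1 ∈ 𝓝[>] (0:ℝ) := Ioo_mem_nhdsGT_of_mem ⟨le_refl 0, one_pos⟩
  constructor
  · refine ge_of_tendsto (hρc u hu) ?_
    filter_upwards [hIoo] with ε hε
    exact (hρ_mem _ (mul_nonneg (by linarith [hε.2]) hu)).1
  · refine le_of_tendsto (hρc u hu) ?_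
    filter_upwards [hIoo] with ε hε
    exact (hρ_mem _ (mul_nonneg (by linarith [hε.2]) hu)).2

include hρ_mono

theorem rhoc_mono : MonotoneOn ρc (Set.Ici 0) := by
  intro u hu v hv huv
  have hIoo : Ioo (0:ℝ) 1 ∈ 𝓝[>] (0:ℝ) := Ioo_mem_nhdsGT_of_mem ⟨le_refl 0, one_pos⟩
  refine le_of_tendsto_of_tendsto (hρc u hu) (hρc v hv) ?_
  filter_upwards [hIoo] with ε hε
  exact hρ_mono (Set.mem_Ici.mpr (mul_nonneg (show (0:ℝ) ≤ 1 - ε by linarith [hε.2]) hu))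
    (Set.mem_Ici.mpr (mul_nonneg (show (0:ℝ) ≤ 1 - ε by linarith [hε.2]) hv))
    (mul_le_mul_of_nonneg_left huv (by linarith [hε.2]))

theorem rho_le_rhoc {v u : ℝ} (hv : 0 ≤ v) (hvu : v < u) : ρ v ≤ ρc u := by
  have hu : 0 ≤ u := le_trans hv hvu.le
  have hT : Tendsto (fun ε : ℝ => (1 - ε) * u) (𝓝[>] 0) (𝓝 u) := by
    have : Tendsto (fun ε : ℝ => (1 - ε) * u) (𝓝 0) (𝓝 ((1 - 0) * u)) :=
      ((continuous_const.sub continuous_id).mul continuous_const).tendsto 0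
    simpa using this.mono_left nhdsWithin_le_nhds
  have hIoo : Ioo (0:ℝ) 1 ∈ 𝓝[>] (0:ℝ) := Ioo_mem_nhdsGT_of_mem ⟨le_refl 0, one_pos⟩
  refine ge_of_tendsto (hρc u hu) ?_
  filter_upwards [hIoo, hT.eventually (lt_mem_nhds hvu)] with ε hε hvε
  exact hρ_mono hv (mul_nonneg (by linarith [hε.2]) hu) hvε.le

/-- sequential left-continuity of `ρc` on `[0,L)` -/
theorem rhoc_tendsto {u : ℝ} (hu : 0 ≤ u) (w : ℕ → ℝ) (hw0 : ∀ k, 0 ≤ w k)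
    (hwu : ∀ k, w k ≤ u) (hw : Tendsto w atTop (𝓝 u)) :
    Tendsto (fun k => ρc (w k)) atTop (𝓝 (ρc u)) := by
  rcases eq_or_lt_of_le hu with rfl | hupos
  · have : ∀ k, w k = 0 := fun k => le_antisymm (hwu k) (hw0 k)
    simpa [this] using tendsto_const_nhds
  refine tendsto_order.mpr ⟨?_, ?_⟩
  · intro a ha
    have hIoo : Ioo (0:ℝ) 1 ∈ 𝓝[>] (0:ℝ) := Ioo_mem_nhdsGT_of_mem ⟨le_refl 0, one_pos⟩
    have hIooE : ∀ᶠ ε in 𝓝[>] (0:ℝ), ε ∈ Ioo (0:ℝ) 1 := hIoo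
    obtain ⟨ε, hε, haρ⟩ := (hIooE.and ((hρc u hupos.le).eventually (lt_mem_nhds ha))).exists
    have hvu : (1 - ε) * u < u := by nlinarith [hε.1, hε.2]
    have hv0 : 0 ≤ (1 - ε) * u := mul_nonneg (by linarith [hε.2]) hupos.le
    filter_upwards [hw.eventually (lt_mem_nhds hvu)] with k hk
    exact lt_of_lt_of_le haρ (rho_le_rhoc ρ ρc hρ_mono hρc hv0 hk)
  · intro b hb
    filter_upwards with k
    exact lt_of_le_of_lt (rhoc_mono ρ ρc hρ_mono hρc (hw0 k) hu (hwu k)) hb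

end Rhoc

section GFS

variable {Ω : Type*} [MeasureSpace Ω] {M : ℕ}

/-- the argument of `ρ` in `fFS` -/
noncomputable def argFS (h : (Fin M → ℝ) → Fin M → ℝ) (X : Ω → Fin M → ℝ) (C : Ω → ℝ≥0∞)
    (L : Ω → ℝ) (χ : Fin M → ℝ) (ω : Ω) : ℝ :=
  (L ω + ∑ m', X ω m' * h χ m') / (C ω).toReal

/-- `g^m(χ) = E[X^m ρ((L + X·h(χ))/C)]`, so that fFS eq g minus chi. -/
noncomputable def gFS (ρ : ℝ → ℝ) (h : (Fin M → ℝ) → Fin M → ℝ) (X : Ω → Fin M → ℝ)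
    (C : Ω → ℝ≥0∞) (L : Ω → ℝ) (m : Fin M) (χ : Fin M → ℝ) : ℝ :=
  ∫ ω, X ω m * ρ (argFS h X C L χ ω)

theorem fFS_eq (ρ : ℝ → ℝ) (h : (Fin M → ℝ) → Fin M → ℝ) (X : Ω → Fin M → ℝ)
    (C : Ω → ℝ≥0∞) (L : Ω → ℝ) (m : Fin M) (χ : Fin M → ℝ) :
    fFS ρ h X C L m χ = gFS ρ h X C L m χ - χ m := rfl

variable (ρc : ℝ → ℝ) (h : (Fin M → ℝ) → Fin M → ℝ)
  (X : Ω → Fin M → ℝ) (C : Ω → ℝ≥0∞) (L : Ω → ℝ)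
  (hρc_mono : MonotoneOn ρc (Set.Ici 0))
  (hρc_mem : ∀ u : ℝ, 0 ≤ u → ρc u ∈ Set.Icc (0:ℝ) 1)
  (hh_mono : ∀ m (χ χ' : Fin M → ℝ), (∀ m', 0 ≤ χ m') → (∀ m', χ m' ≤ χ' m') → h χ m ≤ h χ' m)
  (hh_mem : ∀ m (χ : Fin M → ℝ), (∀ m', 0 ≤ χ m') → h χ m ∈ Set.Icc (0:ℝ) 1)
  (hX_nonneg : ∀ ω m, 0 ≤ X ω m) (hL_nonneg : ∀ ω, 0 ≤ L ω)
  (hX_meas : ∀ m, Measurable fun ω => X ω m) (hC_meas : Measurable C) (hL_meas : Measurable L)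
  (hX_int : ∀ m, Integrable fun ω => X ω m)

theorem argFS_nonneg (hh_mem : ∀ m (χ : Fin M → ℝ), (∀ m', 0 ≤ χ m') → h χ m ∈ Set.Icc (0:ℝ) 1)
    (hX_nonneg : ∀ ω m, 0 ≤ X ω m) (hL_nonneg : ∀ ω, 0 ≤ L ω)
    {χ : Fin M → ℝ} (hχ : ∀ m, 0 ≤ χ m) (ω : Ω) : 0 ≤ argFS h X C L χ ω :=
  div_nonneg (add_nonneg (hL_nonneg ω) (Finset.sum_nonneg fun m' _ =>
    mul_nonneg (hX_nonneg ω m') (hh_mem m' χ hχ).1)) ENNReal.toReal_nonneg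

theorem argFS_mono (hX_nonneg : ∀ ω m, 0 ≤ X ω m)
    {χ χ' : Fin M → ℝ} (hle : ∀ m', h χ m' ≤ h χ' m') (ω : Ω) :
    argFS h X C L χ ω ≤ argFS h X C L χ' ω := by
  unfold argFS
  simp only [div_eq_mul_inv]
  refine mul_le_mul_of_nonneg_right (add_le_add le_rfl ?_) (inv_nonneg.mpr ENNReal.toReal_nonneg)
  exact Finset.sum_le_sum fun m' _ => mul_le_mul_of_nonneg_left (hle m') (hX_nonneg ω m')

theorem argFS_meas (hX_meas : ∀ m, Measurable fun ω => X ω m) (hC_meas : Measurable C)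
    (hL_meas : Measurable L) (χ : Fin M → ℝ) : Measurable (argFS h X C L χ) :=
  (hL_meas.add (Finset.measurable_sum _ fun m' _ => (hX_meas m').mul_const _)).div
    hC_meas.ennreal_toReal

include hρc_mono hh_mem hX_nonneg hL_nonneg in
theorem integrand_meas (hX_meas : ∀ m, Measurable fun ω => X ω m) (hC_meas : Measurable C)
    (hL_meas : Measurable L) (m : Fin M) {χ : Fin M → ℝ} (hχ : ∀ m, 0 ≤ χ m) :
    Measurable fun ω => X ω m * ρc (argFS h X C L χ ω) := by
  have hmono' : Monotone fun u : ℝ => ρc (max u 0) := fun a b hab =>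
    hρc_mono (Set.mem_Ici.mpr (le_max_right _ _)) (Set.mem_Ici.mpr (le_max_right _ _)) (max_le_max hab le_rfl)
  have heq : (fun ω => ρc (argFS h X C L χ ω)) = fun ω => (fun u => ρc (max u 0)) (argFS h X C L χ ω) := by
    funext ω
    simp only [max_eq_left (argFS_nonneg h X C L hh_mem hX_nonneg hL_nonneg hχ ω)]
  exact (hX_meas m).mul (heq ▸ hmono'.measurable.comp (argFS_meas h X C L hX_meas hC_meas hL_meas χ))

include hρc_mono hρc_mem hh_mem hX_nonneg hL_nonneg hX_meas hC_meas hL_meas hX_int in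
theorem integrand_int (m : Fin M) {χ : Fin M → ℝ} (hχ : ∀ m, 0 ≤ χ m) :
    Integrable fun ω => X ω m * ρc (argFS h X C L χ ω) := by
  refine (hX_int m).mono
    (integrand_meas ρc h X C L hρc_mono hh_mem hX_nonneg hL_nonneg hX_meas hC_meas hL_meas m hχ).aestronglyMeasurable
    (Filter.Eventually.of_forall fun ω => ?_)
  have hb := hρc_mem _ (argFS_nonneg h X C L hh_mem hX_nonneg hL_nonneg hχ ω)
  rw [Real.norm_eq_abs, Real.norm_eq_abs, abs_mul, abs_of_nonneg (hX_nonneg ω m),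
    abs_of_nonneg hb.1]
  exact mul_le_of_le_one_right (hX_nonneg ω m) hb.2

include hρc_mem hh_mem hX_nonneg hL_nonneg in
theorem gFS_nonneg (m : Fin M) {χ : Fin M → ℝ} (hχ : ∀ m, 0 ≤ χ m) :
    0 ≤ gFS ρc h X C L m χ :=
  integral_nonneg fun ω => mul_nonneg (hX_nonneg ω m)
    (hρc_mem _ (argFS_nonneg h X C L hh_mem hX_nonneg hL_nonneg hχ ω)).1

include hρc_mono hρc_mem hh_mem hX_nonneg hL_nonneg hX_meas hC_meas hL_meas hX_int in
theorem gFS_le (m : Fin M) {χ : Fin M → ℝ} (hχ : ∀ m, 0 ≤ χ m) :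
    gFS ρc h X C L m χ ≤ ∫ ω, X ω m := by
  refine integral_mono
    (integrand_int ρc h X C L hρc_mono hρc_mem hh_mem hX_nonneg hL_nonneg hX_meas hC_meas hL_meas hX_int m hχ)
    (hX_int m) fun ω => ?_
  exact mul_le_of_le_one_right (hX_nonneg ω m)
    (hρc_mem _ (argFS_nonneg h X C L hh_mem hX_nonneg hL_nonneg hχ ω)).2

include hρc_mono hρc_mem hh_mono hh_mem hX_nonneg hL_nonneg hX_meas hC_meas hL_meas hX_int in
theorem gFS_mono (m : Fin M) {χ χ' : Fin M → ℝ} (hχ : ∀ m, 0 ≤ χ m)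
    (hle : ∀ m', χ m' ≤ χ' m') : gFS ρc h X C L m χ ≤ gFS ρc h X C L m χ' := by
  have hχ' : ∀ m, 0 ≤ χ' m := fun m' => le_trans (hχ m') (hle m')
  refine integral_mono
    (integrand_int ρc h X C L hρc_mono hρc_mem hh_mem hX_nonneg hL_nonneg hX_meas hC_meas hL_meas hX_int m hχ)
    (integrand_int ρc h X C L hρc_mono hρc_mem hh_mem hX_nonneg hL_nonneg hX_meas hC_meas hL_meas hX_int m hχ')
    fun ω => ?_
  refine mul_le_mul_of_nonneg_left ?_ (hX_nonneg ω m)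
  exact hρc_mono (argFS_nonneg h X C L hh_mem hX_nonneg hL_nonneg hχ ω)
    (argFS_nonneg h X C L hh_mem hX_nonneg hL_nonneg hχ' ω)
    (argFS_mono h X C L hX_nonneg (fun m' => hh_mono m' χ χ' hχ hle) ω)

include hρc_mono hρc_mem hh_mono hh_mem hX_nonneg hL_nonneg hX_meas hC_meas hL_meas hX_int in
theorem gFS_tendsto
    (hρc_lc : ∀ u : ℝ, 0 ≤ u → ∀ w : ℕ → ℝ, (∀ k, 0 ≤ w k) → (∀ k, w k ≤ u) →
      Tendsto w atTop (𝓝 u) → Tendsto (fun k => ρc (w k)) atTop (𝓝 (ρc u)))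
    (hh_cont : ∀ m, ContinuousOn (fun χ => h χ m) {χ : Fin M → ℝ | ∀ m', 0 ≤ χ m'})
    (χk : ℕ → Fin M → ℝ) (χL : Fin M → ℝ)
    (hχk0 : ∀ k m, 0 ≤ χk k m) (hχkle : ∀ k m, χk k m ≤ χL m)
    (htend : ∀ m, Tendsto (fun k => χk k m) atTop (𝓝 (χL m))) (m : Fin M) :
    Tendsto (fun k => gFS ρc h X C L m (χk k)) atTop (𝓝 (gFS ρc h X C L m χL)) := by
  have hχL0 : ∀ m, 0 ≤ χL m := fun m' => le_trans (hχk0 0 m') (hχkle 0 m')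
  refine tendsto_integral_of_dominated_convergence (fun ω => X ω m)
    (fun k => (integrand_meas ρc h X C L hρc_mono hh_mem hX_nonneg hL_nonneg hX_meas hC_meas
      hL_meas m (hχk0 k)).aestronglyMeasurable)
    (hX_int m) (fun k => Filter.Eventually.of_forall fun ω => ?_)
    (Filter.Eventually.of_forall fun ω => ?_)
  · have hb := hρc_mem _ (argFS_nonneg h X C L hh_mem hX_nonneg hL_nonneg (hχk0 k) ω)
    rw [Real.norm_eq_abs, abs_mul, abs_of_nonneg (hX_nonneg ω m), abs_of_nonneg hb.1]
    exact mul_le_of_le_one_right (hX_nonneg ω m) hb.2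
  · -- pointwise convergence
    have htendχ : Tendsto χk atTop (𝓝 χL) := tendsto_pi_nhds.mpr htend
    have hharg : ∀ m', Tendsto (fun k => h (χk k) m') atTop (𝓝 (h χL m')) := by
      intro m'
      have hcw : ContinuousWithinAt (fun χ => h χ m') {χ : Fin M → ℝ | ∀ m'', 0 ≤ χ m''} χL :=
        (hh_cont m') _ hχL0
      exact hcw.tendsto.comp (tendsto_nhdsWithin_of_tendsto_nhds_of_eventually_within _ htendχ
        (Filter.Eventually.of_forall fun k => hχk0 k))
    have harg : Tendsto (fun k => argFS h X C L (χk k) ω) atTop (𝓝 (argFS h X C L χL ω)) := by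
      refine Tendsto.div_const ?_ _
      exact tendsto_const_nhds.add (tendsto_finset_sum _ fun m' _ =>
        Tendsto.const_mul _ (hharg m'))
    refine Tendsto.const_mul _ ?_
    refine hρc_lc _ (argFS_nonneg h X C L hh_mem hX_nonneg hL_nonneg hχL0 ω) _
      (fun k => argFS_nonneg h X C L hh_mem hX_nonneg hL_nonneg (hχk0 k) ω)
      (fun k => argFS_mono h X C L hX_nonneg (fun m' => hh_mono m' _ _ (hχk0 k) (hχkle k)) ω) harg

include hρc_mono hρc_mem hh_mono hh_mem hX_nonneg hL_nonneg hX_meas hC_meas hL_meas hX_int in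
/-- iteration from 0: any nonnegative super-solution of `g(χ) ≤ χ` dominates a fixed point. -/
theorem exists_fixedPoint_le
    (hρc_lc : ∀ u : ℝ, 0 ≤ u → ∀ w : ℕ → ℝ, (∀ k, 0 ≤ w k) → (∀ k, w k ≤ u) →
      Tendsto w atTop (𝓝 u) → Tendsto (fun k => ρc (w k)) atTop (𝓝 (ρc u)))
    (hh_cont : ∀ m, ContinuousOn (fun χ => h χ m) {χ : Fin M → ℝ | ∀ m', 0 ≤ χ m'})
    (χ : Fin M → ℝ) (hχ : ∀ m, 0 ≤ χ m) (hsub : ∀ m, gFS ρc h X C L m χ ≤ χ m) :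
    ∃ χL : Fin M → ℝ, (∀ m, 0 ≤ χL m) ∧ (∀ m, χL m ≤ χ m) ∧
      ∀ m, gFS ρc h X C L m χL = χL m := by
  set seq : ℕ → Fin M → ℝ := fun k =>
    Nat.rec (motive := fun _ => Fin M → ℝ) 0 (fun _ prev m => gFS ρc h X C L m prev) k with hseq
  have hseq0 : seq 0 = 0 := rfl
  have hseqS : ∀ k m, seq (k + 1) m = gFS ρc h X C L m (seq k) := fun k m => rfl
  have hpos : ∀ k m, 0 ≤ seq k m := by
    intro k
    induction k with
    | zero => intro m; simp [hseq0]
    | succ k ih =>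
      intro m
      rw [hseqS]
      exact gFS_nonneg ρc h X C L hρc_mem hh_mem hX_nonneg hL_nonneg m ih
  have hub : ∀ k m, seq k m ≤ χ m := by
    intro k
    induction k with
    | zero => intro m; simpa [hseq0] using hχ m
    | succ k ih =>
      intro m
      rw [hseqS]
      exact le_trans (gFS_mono ρc h X C L hρc_mono hρc_mem hh_mono hh_mem hX_nonneg hL_nonneg
        hX_meas hC_meas hL_meas hX_int m (hpos k) ih) (hsub m)
  have hstep : ∀ k m, seq k m ≤ seq (k + 1) m := by
    intro k
    induction k with
    | zero =>
      intro m
      rw [hseqS]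
      simpa [hseq0] using gFS_nonneg ρc h X C L hρc_mem hh_mem hX_nonneg hL_nonneg m (χ := 0)
        (fun m' => le_refl (0:ℝ))
    | succ k ih =>
      intro m
      rw [hseqS (k+1) m, hseqS k m]
      exact gFS_mono ρc h X C L hρc_mono hρc_mem hh_mono hh_mem hX_nonneg hL_nonneg
        hX_meas hC_meas hL_meas hX_int m (hpos k) ih
  have hmonoseq : ∀ m, Monotone fun k => seq k m := fun m =>
    monotone_nat_of_le_succ fun k => hstep k m
  have hbdd : ∀ m, BddAbove (Set.range fun k => seq k m) := fun m =>
    ⟨χ m, by rintro x ⟨k, rfl⟩; exact hub k m⟩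
  set χL : Fin M → ℝ := fun m => ⨆ k, seq k m with hχL
  have htend : ∀ m, Tendsto (fun k => seq k m) atTop (𝓝 (χL m)) := fun m =>
    tendsto_atTop_ciSup (hmonoseq m) (hbdd m)
  have hleL : ∀ k m, seq k m ≤ χL m := fun k m => le_ciSup (hbdd m) k
  have hχLle : ∀ m, χL m ≤ χ m := fun m => ciSup_le fun k => hub k m
  have hχL0 : ∀ m, 0 ≤ χL m := fun m => le_trans (hpos 0 m) (hleL 0 m)
  refine ⟨χL, hχL0, hχLle, fun m => ?_⟩
  have h1 : Tendsto (fun k => gFS ρc h X C L m (seq k)) atTop (𝓝 (gFS ρc h X C L m χL)) :=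
    gFS_tendsto ρc h X C L hρc_mono hρc_mem hh_mono hh_mem hX_nonneg hL_nonneg hX_meas hC_meas
      hL_meas hX_int hρc_lc hh_cont seq χL hpos hleL htend m
  have h2 : Tendsto (fun k => gFS ρc h X C L m (seq k)) atTop (𝓝 (χL m)) := by
    have := (htend m).comp (tendsto_add_atTop_nat 1)
    simpa [Function.comp_def, hseqS] using this
  exact tendsto_nhds_unique h1 h2

end GFS

theorem fFS_eq_g {Ω : Type*} [MeasureSpace Ω] {M : ℕ} (ρ : ℝ → ℝ)
    (h : (Fin M → ℝ) → Fin M → ℝ) (X : Ω → Fin M → ℝ) (C : Ω → ℝ≥0∞) (L : Ω → ℝ)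
    (m : Fin M) (χ : Fin M → ℝ) : fFS ρ h X C L m χ = gFS ρ h X C L m χ - χ m := rfl


/-- If `liminf_{r→∞} f̊_r^m(χ) ≥ f̊^m(χ)` pointwise on `[0,∞)^M` for every `m`, then the smallest
joint roots satisfy `liminf_{r→∞} χ̂_r ≥ χ̂` componentwise (in the extended reals). -/
theorem stmt_14 {Ω : Type*} [MeasureSpace Ω] [IsProbabilityMeasure (volume : Measure Ω)] {M : ℕ}
    (ρ : ℝ → ℝ) (hρ_mono : MonotoneOn ρ (Set.Ici 0))
    (hρ_rc : ∀ u ∈ Set.Ici (0:ℝ), ContinuousWithinAt ρ (Set.Ici u) u)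
    (hρ_zero : ρ 0 = 0) (hρ_mem : ∀ u ∈ Set.Ici (0:ℝ), ρ u ∈ Set.Icc (0:ℝ) 1)
    (hρ_plateau : ∀ u : ℝ, 1 ≤ u → ρ u = ρ 1)
    (ρc : ℝ → ℝ)
    (hρc : ∀ u : ℝ, 0 ≤ u → Tendsto (fun ε => ρ ((1 - ε) * u)) (𝓝[>] 0) (𝓝 (ρc u)))
    (h : (Fin M → ℝ) → Fin M → ℝ)
    (hh_cont : ∀ m, ContinuousOn (fun χ => h χ m) {χ : Fin M → ℝ | ∀ m', 0 ≤ χ m'})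
    (hh_mono : ∀ m (χ χ' : Fin M → ℝ), (∀ m', 0 ≤ χ m') → (∀ m', χ m' ≤ χ' m') → h χ m ≤ h χ' m)
    (hh_mem : ∀ m (χ : Fin M → ℝ), (∀ m', 0 ≤ χ m') → h χ m ∈ Set.Icc (0:ℝ) 1)
    (Xs : ℕ → Ω → Fin M → ℝ) (Ss : ℕ → Ω → ℝ) (Cs : ℕ → Ω → ℝ≥0∞) (Ls : ℕ → Ω → ℝ)
    (hXs_nonneg : ∀ r ω m, 0 ≤ Xs r ω m) (hSs_nonneg : ∀ r ω, 0 ≤ Ss r ω)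
    (hCs_pos : ∀ r ω, 0 < Cs r ω) (hLs_nonneg : ∀ r ω, 0 ≤ Ls r ω)
    (hXs_meas : ∀ r m, Measurable fun ω => Xs r ω m) (hSs_meas : ∀ r, Measurable (Ss r))
    (hCs_meas : ∀ r, Measurable (Cs r)) (hLs_meas : ∀ r, Measurable (Ls r))
    (hXs_int : ∀ r m, Integrable fun ω => Xs r ω m) (hSs_int : ∀ r, Integrable (Ss r))
    (X : Ω → Fin M → ℝ) (S : Ω → ℝ) (C : Ω → ℝ≥0∞) (L : Ω → ℝ)
    (hX_nonneg : ∀ ω m, 0 ≤ X ω m) (hS_nonneg : ∀ ω, 0 ≤ S ω) (hC_pos : ∀ ω, 0 < C ω)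
    (hL_nonneg : ∀ ω, 0 ≤ L ω)
    (hX_meas : ∀ m, Measurable fun ω => X ω m) (hS_meas : Measurable S)
    (hC_meas : Measurable C) (hL_meas : Measurable L)
    (hX_int : ∀ m, Integrable fun ω => X ω m) (hS_int : Integrable S)
    (χhats : ℕ → Fin M → ℝ)
    (hχhats_nonneg : ∀ r m, 0 ≤ χhats r m)
    (hχhats_root : ∀ r m, fFS ρc h (Xs r) (Cs r) (Ls r) m (χhats r) = 0)
    (hχhats_min : ∀ r (χ' : Fin M → ℝ), (∀ m, 0 ≤ χ' m) →
      (∀ m, fFS ρc h (Xs r) (Cs r) (Ls r) m χ' = 0) → ∀ m, χhats r m ≤ χ' m)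
    (χhat : Fin M → ℝ) (hχhat_nonneg : ∀ m, 0 ≤ χhat m)
    (hχhat_root : ∀ m, fFS ρc h X C L m χhat = 0)
    (hχhat_min : ∀ χ' : Fin M → ℝ, (∀ m, 0 ≤ χ' m) → (∀ m, fFS ρc h X C L m χ' = 0) →
      ∀ m, χhat m ≤ χ' m)
    (hliminf : ∀ χ : Fin M → ℝ, (∀ m, 0 ≤ χ m) → ∀ m,
      ((fFS ρc h X C L m χ : ℝ) : EReal) ≤
        Filter.liminf (fun r => ((fFS ρc h (Xs r) (Cs r) (Ls r) m χ : ℝ) : EReal)) atTop) :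
    ∀ m, ((χhat m : ℝ) : EReal) ≤ Filter.liminf (fun r => ((χhats r m : ℝ) : EReal)) atTop := by
  -- derived facts about ρc
  have hρcm : MonotoneOn ρc (Set.Ici 0) := rhoc_mono ρ ρc hρ_mono hρc
  have hρcb : ∀ u : ℝ, 0 ≤ u → ρc u ∈ Set.Icc (0:ℝ) 1 := fun u hu => rhoc_mem ρ ρc hρc hρ_mem hu
  have hρclc : ∀ u : ℝ, 0 ≤ u → ∀ w : ℕ → ℝ, (∀ k, 0 ≤ w k) → (∀ k, w k ≤ u) →
      Tendsto w atTop (𝓝 u) → Tendsto (fun k => ρc (w k)) atTop (𝓝 (ρc u)) :=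
    fun u hu w h1 h2 h3 => rhoc_tendsto ρ ρc hρ_mono hρc hu w h1 h2 h3
  set c : Fin M → EReal := fun m => liminf (fun r => ((χhats r m : ℝ) : EReal)) atTop with hc
  have hc0 : ∀ m, (0:EReal) ≤ c m := fun m =>
    le_liminf_of_le (by isBoundedDefault)
      (Filter.Eventually.of_forall fun r => by exact_mod_cast hχhats_nonneg r m)
  have hcnb : ∀ m, c m ≠ ⊥ := by
    intro m hbot
    have h1 := hc0 m
    rw [hbot] at h1
    exact absurd h1 (not_le.mpr EReal.bot_lt_zero)
  have hcr : ∀ m, c m ≠ ⊤ → ((c m).toReal : EReal) = c m := fun m hm =>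
    EReal.coe_toReal hm (hcnb m)
  set B : Fin M → ℝ := fun m => ∫ ω, X ω m with hB
  have hB0 : ∀ m, 0 ≤ B m := fun m => integral_nonneg fun ω => hX_nonneg ω m
  set χb : Fin M → ℝ := fun m => if c m = ⊤ then B m else min (c m).toReal (B m) with hχb
  have htR0 : ∀ m, c m ≠ ⊤ → 0 ≤ (c m).toReal := by
    intro m hm
    have h1 := hc0 m
    rw [← hcr m hm] at h1
    exact_mod_cast h1
  have hχb0 : ∀ m, 0 ≤ χb m := by
    intro m
    by_cases hm : c m = ⊤
    · simp only [hχb, if_pos hm]; exact hB0 m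
    · simp only [hχb, if_neg hm]; exact le_min (htR0 m hm) (hB0 m)
  have hχbc : ∀ m, (χb m : EReal) ≤ c m := by
    intro m
    by_cases hm : c m = ⊤
    · simp [hm]
    · simp only [hχb, if_neg hm]
      rw [← hcr m hm]
      exact_mod_cast min_le_left _ _
  -- the key sub-solution estimate for t ∈ [0,1)
  have key : ∀ t : ℝ, 0 ≤ t → t < 1 → ∀ m, gFS ρc h X C L m (fun m' => t * χb m') ≤ χb m := by
    intro t ht0 ht1 m
    have hχt0 : ∀ m', 0 ≤ t * χb m' := fun m' => mul_nonneg ht0 (hχb0 m')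
    have hev : ∀ᶠ r in atTop, ∀ m', t * χb m' ≤ χhats r m' := by
      rw [eventually_all]
      intro m'
      rcases eq_or_lt_of_le (hχb0 m') with h0 | hpos
      · exact Filter.Eventually.of_forall fun r => by
          rw [← h0, mul_zero]; exact hχhats_nonneg r m'
      · have h1 : ((t * χb m' : ℝ) : EReal) < c m' := by
          refine lt_of_lt_of_le ?_ (hχbc m')
          exact_mod_cast mul_lt_of_lt_one_left hpos ht1
        filter_upwards [eventually_lt_of_lt_liminf h1] with r hr
        exact_mod_cast hr.le
    have hkey : (gFS ρc h X C L m (fun m' => t * χb m') : EReal) ≤ c m := by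
      by_contra hlt
      push_neg at hlt
      obtain ⟨y, hy1, hy2⟩ := EReal.lt_iff_exists_real_btwn.mp hlt
      have hy2' : y < gFS ρc h X C L m (fun m' => t * χb m') := EReal.coe_lt_coe_iff.mp hy2
      have hstep1 : ((y - t * χb m : ℝ) : EReal) <
          liminf (fun r => ((fFS ρc h (Xs r) (Cs r) (Ls r) m (fun m' => t * χb m') : ℝ) : EReal))
            atTop := by
        refine lt_of_lt_of_le ?_ (hliminf _ hχt0 m)
        rw [EReal.coe_lt_coe_iff, fFS_eq_g]
        beta_reduce
        linarith
      have hev3 : ∀ᶠ r in atTop, fFS ρc h (Xs r) (Cs r) (Ls r) m (fun m' => t * χb m') ≤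
          χhats r m - t * χb m := by
        filter_upwards [hev] with r hr
        rw [fFS_eq_g]
        have hg1 : gFS ρc h (Xs r) (Cs r) (Ls r) m (fun m' => t * χb m') ≤
            gFS ρc h (Xs r) (Cs r) (Ls r) m (χhats r) :=
          gFS_mono ρc h (Xs r) (Cs r) (Ls r) hρcm hρcb hh_mono hh_mem (hXs_nonneg r)
            (hLs_nonneg r) (hXs_meas r) (hCs_meas r) (hLs_meas r) (hXs_int r) m hχt0 hr
        have hg2 : gFS ρc h (Xs r) (Cs r) (Ls r) m (χhats r) = χhats r m := by
          have h5 := hχhats_root r m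
          rw [fFS_eq_g] at h5
          linarith
        beta_reduce
        linarith
      have hev4 : ∀ᶠ r in atTop, (y : EReal) ≤ ((χhats r m : ℝ) : EReal) := by
        filter_upwards [eventually_lt_of_lt_liminf hstep1, hev3] with r h1 h2
        rw [EReal.coe_le_coe_iff]
        have h3 := EReal.coe_lt_coe_iff.mp h1
        linarith
      exact absurd (le_liminf_of_le (by isBoundedDefault) hev4) (not_le.mpr hy1)
    have hgB : gFS ρc h X C L m (fun m' => t * χb m') ≤ B m :=
      gFS_le ρc h X C L hρcm hρcb hh_mem hX_nonneg hL_nonneg hX_meas hC_meas hL_meas hX_int m hχt0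
    by_cases hm : c m = ⊤
    · simp only [hχb, if_pos hm]; exact hgB
    · have h1 : gFS ρc h X C L m (fun m' => t * χb m') ≤ (c m).toReal := by
        rw [← hcr m hm] at hkey
        exact_mod_cast hkey
      simp only [hχb, if_neg hm]
      exact le_min h1 hgB
  -- pass to the limit t → 1 to get g(χb) ≤ χb
  have hgχb : ∀ m, gFS ρc h X C L m χb ≤ χb m := by
    intro m
    have htk0 : ∀ k : ℕ, 0 ≤ 1 - ((k:ℝ)+1)⁻¹ := by
      intro k
      have hk1 : (1:ℝ) ≤ (k:ℝ) + 1 := by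
        have := (Nat.cast_nonneg k : (0:ℝ) ≤ (k:ℝ))
        linarith
      have := inv_le_one_of_one_le₀ hk1
      linarith
    have htk1 : ∀ k : ℕ, 1 - ((k:ℝ)+1)⁻¹ < 1 := by
      intro k
      have hk1 : (0:ℝ) < (k:ℝ) + 1 := by positivity
      have := inv_pos.mpr hk1
      linarith
    have hseq : Tendsto (fun k : ℕ => gFS ρc h X C L m (fun m' => (1 - ((k:ℝ)+1)⁻¹) * χb m'))
        atTop (𝓝 (gFS ρc h X C L m χb)) := by
      refine gFS_tendsto ρc h X C L hρcm hρcb hh_mono hh_mem hX_nonneg hL_nonneg hX_meas hC_meas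
        hL_meas hX_int hρclc hh_cont _ χb (fun k m' => mul_nonneg (htk0 k) (hχb0 m'))
        (fun k m' => mul_le_of_le_one_left (hχb0 m') (htk1 k).le) (fun m' => ?_) m
      have h1 : Tendsto (fun k : ℕ => 1 - ((k:ℝ)+1)⁻¹) atTop (𝓝 1) := by
        have h2 : Tendsto (fun k : ℕ => ((k:ℝ)+1)⁻¹) atTop (𝓝 0) := by
          simpa [one_div] using tendsto_one_div_add_atTop_nhds_zero_nat (𝕜 := ℝ)
        simpa using tendsto_const_nhds.sub h2
      simpa using h1.mul_const (χb m')
    exact le_of_tendsto hseq (Filter.Eventually.of_forall fun k => key _ (htk0 k) (htk1 k) m)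
  -- obtain a fixed point below χb and conclude by minimality of χhat
  obtain ⟨χI, hχI0, hχIle, hχIfix⟩ := exists_fixedPoint_le ρc h X C L hρcm hρcb hh_mono hh_mem
    hX_nonneg hL_nonneg hX_meas hC_meas hL_meas hX_int hρclc hh_cont χb hχb0 hgχb
  have hroot : ∀ m, fFS ρc h X C L m χI = 0 := fun m => by
    rw [fFS_eq_g, hχIfix m, sub_self]
  have hhatle : ∀ m, χhat m ≤ χb m := fun m => le_trans (hχhat_min χI hχI0 hroot m) (hχIle m)
  intro m0
  show ((χhat m0 : ℝ) : EReal) ≤ c m0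
  by_cases hm : c m0 = ⊤
  · rw [hm]; exact le_top
  · have h1 : χhat m0 ≤ (c m0).toReal := by
      refine le_trans (hhatle m0) ?_
      simp only [hχb, if_neg hm]
      exact min_le_left _ _
    calc ((χhat m0 : ℝ) : EReal) ≤ ((c m0).toReal : EReal) := by exact_mod_cast h1
      _ = c m0 := hcr m0 hm
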